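/- Let G₁ be obtained from a finite hypergraph G = (V, E) by adding a k-dominating set S. The function y on V ∪ S defined by y(v) = −k/|V| for v ∈ V and y(v) = 1 for v ∈ S is an eigenvector of L_{G₁} with eigenvalue (|V| + k)/k. -/

import Mathlib

open Finset

/-- The hypergraph Laplacian as an operator on real-valued vertex functions:
`(L_G f)(v) = ∑_{e ∋ v} (1/(|e|-1)) ∑_{u ∈ e} (f v - f u)`. -/
noncomputable def lapOp {V : Type} [Fintype V] [DecidableEq V] (E : Finset (Finset V)) (f : V → ℝ) : V → ℝ :=
  fun v => ∑ e ∈ E.filter (fun e => v ∈ e), (1 / ((e.card : ℝ) - 1)) * ∑ u ∈ e, (f v - f u)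

/-- The matrix of the hypergraph Laplacian. -/
noncomputable def lapMatrix {V : Type} [Fintype V] [DecidableEq V] (E : Finset (Finset V)) : Matrix V V ℝ :=
  Matrix.of fun v w => ∑ e ∈ E.filter (fun e => v ∈ e),
    (1 / ((e.card : ℝ) - 1)) * ((if w = v then (e.card : ℝ) else 0) - (if w ∈ e then 1 else 0))

/-- Edge set obtained from `E` by adding a `k`-dominating set `S = Fin k` of fresh vertices:
the new edges are `S ∪ {u}` for every old vertex `u`. -/
def domEdges {V : Type} [Fintype V] [DecidableEq V] (E : Finset (Finset V)) (k : ℕ) :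
    Finset (Finset (V ⊕ Fin k)) :=
  E.image (Finset.image Sum.inl) ∪
    (Finset.univ : Finset V).image
      (fun u => insert (Sum.inl u) ((Finset.univ : Finset (Fin k)).image Sum.inr))

/-- The function with value `-k/|V|` on the old vertices and `1` on the dominating set is
an eigenvector of `L_{G₁}` with eigenvalue `(|V| + k)/k`. -/
theorem stmt_3 {V : Type} [Fintype V] [DecidableEq V] [Nonempty V]
    (E : Finset (Finset V)) (hE : ∀ e ∈ E, 2 ≤ e.card) (k : ℕ) (hk : 0 < k) :
    Sum.elim (fun _ : V => -(k : ℝ) / (Fintype.card V)) (fun _ : Fin k => (1 : ℝ)) ≠ 0 ∧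
      lapOp (domEdges E k)
          (Sum.elim (fun _ : V => -(k : ℝ) / (Fintype.card V)) fun _ : Fin k => (1 : ℝ)) =
        (((Fintype.card V : ℝ) + k) / k) •
          Sum.elim (fun _ : V => -(k : ℝ) / (Fintype.card V)) fun _ : Fin k => (1 : ℝ) := by

  classical
  set n := Fintype.card V with hn
  have hn0 : 0 < n := Fintype.card_pos
  have hnR : (n : ℝ) ≠ 0 := Nat.cast_ne_zero.mpr hn0.ne'
  have hkR : (k : ℝ) ≠ 0 := Nat.cast_ne_zero.mpr hk.ne'
  set S : Finset (V ⊕ Fin k) := (Finset.univ : Finset (Fin k)).image Sum.inr with hSdef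
  have hSmem : ∀ x, x ∈ S ↔ ∃ j : Fin k, Sum.inr j = x := by
    intro x; simp [hSdef]
  have hinlS : ∀ u : V, Sum.inl u ∉ S := by
    intro u h; rcases (hSmem _).1 h with ⟨j, hj⟩; cases hj
  have hScard : S.card = k := by
    rw [hSdef, Finset.card_image_of_injective _ Sum.inr_injective, Finset.card_univ,
      Fintype.card_fin]
  set y : (V ⊕ Fin k) → ℝ :=
    Sum.elim (fun _ : V => -(k : ℝ) / n) (fun _ : Fin k => (1 : ℝ)) with hy
  refine ⟨?_, ?_⟩
  · intro h
    have := congrFun h (Sum.inr ⟨0, hk⟩)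
    simp [hy] at this
  · funext v
    have hdisj : ∀ p : Finset (V ⊕ Fin k) → Prop, ∀ inst : DecidablePred p,
        Disjoint ((E.image (Finset.image Sum.inl)).filter p)
          (((Finset.univ : Finset V).image
            (fun u => insert (Sum.inl u) S)).filter p) := by
      intro p inst
      rw [Finset.disjoint_left]
      intro a ha hb
      obtain ⟨e, _, he⟩ := Finset.mem_image.1 (Finset.mem_filter.1 ha).1
      obtain ⟨u, _, hu⟩ := Finset.mem_image.1 (Finset.mem_filter.1 hb).1
      have hmem : Sum.inr (⟨0, hk⟩ : Fin k) ∈ a := by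
        rw [← hu]; exact Finset.mem_insert_of_mem ((hSmem _).2 ⟨_, rfl⟩)
      rw [← he] at hmem
      obtain ⟨w, _, hw⟩ := Finset.mem_image.1 hmem
      cases hw
    have hcard : ∀ u : V, (insert (Sum.inl u) S).card = k + 1 := by
      intro u; rw [Finset.card_insert_of_notMem (hinlS u), hScard]
    simp only [lapOp, domEdges, Pi.smul_apply, smul_eq_mul, ← hSdef]
    rw [Finset.filter_union, Finset.sum_union (hdisj _ _)]
    simp only [Finset.filter_image]
    cases v with
    | inl w =>
      have h1 : ∑ e ∈ (E.filter (fun a => Sum.inl w ∈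
              Finset.image (Sum.inl : V → V ⊕ Fin k) a)).image
            (Finset.image (Sum.inl : V → V ⊕ Fin k)),
          (1 / ((e.card : ℝ) - 1)) * ∑ u ∈ e, (y (Sum.inl w) - y u) = 0 := by
        apply Finset.sum_eq_zero
        intro e he
        obtain ⟨e', _, he'⟩ := Finset.mem_image.1 he
        subst he'
        rw [Finset.sum_image (fun a _ b _ h => Sum.inl_injective h)]
        have : ∀ u ∈ e', y (Sum.inl w) - y (Sum.inl u) = 0 := by
          intro u _; simp [hy]
        rw [Finset.sum_congr rfl this, Finset.sum_const, smul_zero, mul_zero]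
      have hfilt : (Finset.univ : Finset V).filter
          (fun u => Sum.inl w ∈ insert (Sum.inl u) S) = {w} := by
        ext u
        simp only [Finset.mem_filter, Finset.mem_univ, true_and, Finset.mem_insert,
          Finset.mem_singleton]
        constructor
        · rintro (h | h)
          · exact (Sum.inl_injective h).symm
          · exact absurd h (hinlS w)
        · rintro rfl; exact Or.inl rfl
      rw [h1, hfilt, Finset.image_singleton, Finset.sum_singleton, zero_add, hcard,
        Finset.sum_insert (hinlS w), hSdef,
        Finset.sum_image (fun a _ b _ h => Sum.inr_injective h)]
      simp only [hy, Sum.elim_inl, Sum.elim_inr, sub_self, zero_add, Finset.sum_const,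
        Finset.card_univ, Fintype.card_fin, nsmul_eq_mul]
      push_cast
      field_simp
      have hk1 : (k:ℝ) * (k:ℝ)⁻¹ = 1 := mul_inv_cancel₀ hkR
      linear_combination (-(n:ℝ) - k) * hk1
    | inr j =>
      have h1 : ∑ e ∈ (E.filter (fun a => Sum.inr j ∈
              Finset.image (Sum.inl : V → V ⊕ Fin k) a)).image
            (Finset.image (Sum.inl : V → V ⊕ Fin k)),
          (1 / ((e.card : ℝ) - 1)) * ∑ u ∈ e, (y (Sum.inr j) - y u) = 0 := by
        apply Finset.sum_eq_zero
        intro e he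
        obtain ⟨e', he'mem, he'⟩ := Finset.mem_image.1 he
        have : Sum.inr j ∈ Finset.image Sum.inl e' := (Finset.mem_filter.1 he'mem).2
        obtain ⟨w, _, hw⟩ := Finset.mem_image.1 this
        exact absurd hw (by simp)
      have hfilt : (Finset.univ : Finset V).filter
          (fun u => Sum.inr j ∈ insert (Sum.inl u) S) = Finset.univ := by
        apply Finset.filter_true_of_mem
        intro u _
        exact Finset.mem_insert_of_mem ((hSmem _).2 ⟨_, rfl⟩)
      have hinj : ∀ a ∈ (Finset.univ : Finset V), ∀ b ∈ (Finset.univ : Finset V),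
          insert (Sum.inl a) S = insert (Sum.inl b) S → a = b := by
        intro a _ b _ h
        have : Sum.inl a ∈ insert (Sum.inl b) S := h ▸ Finset.mem_insert_self _ _
        rcases Finset.mem_insert.1 this with h' | h'
        · exact Sum.inl_injective h'
        · exact absurd h' (hinlS a)
      rw [h1, hfilt, Finset.sum_image hinj, zero_add]
      have hterm : ∀ u ∈ (Finset.univ : Finset V),
          (1 / (((insert (Sum.inl u) S).card : ℝ) - 1)) *
            ∑ x ∈ insert (Sum.inl u) S, (y (Sum.inr j) - y x)
          = (1 / (k : ℝ)) * (1 + (k : ℝ) / n) := by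
        intro u _
        rw [hcard, Finset.sum_insert (hinlS u), hSdef,
          Finset.sum_image (fun a _ b _ h => Sum.inr_injective h)]
        simp only [hy, Sum.elim_inl, Sum.elim_inr, sub_self, Finset.sum_const,
          Finset.card_univ, Fintype.card_fin, nsmul_eq_mul, mul_zero, add_zero]
        push_cast
        field_simp
        rw [add_sub_cancel_right, mul_div_cancel_left₀ _ hkR]; ring
      rw [Finset.sum_congr rfl hterm, Finset.sum_const, Finset.card_univ, ← hn,
        nsmul_eq_mul]
      simp only [hy, Sum.elim_inr, mul_one]
      field_simp
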